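/- Assume hypotheses (H1), (H2) and (H3). Then for every ε ∈ (0,ε₀] there exists an integer N ∈ ℕ (depending only on ε) such that for all x,y ∈ M, all ω ∈ Ω and all n ≥ N, the set F_ω^n(W^u_ε(ω,x)) ∩ W^s_ε(θ^n ω, y) is nonempty. -/
import Mathlib


open Set Filter Topology MeasureTheory ENNReal NNReal

noncomputable section

namespace Paper

variable {Ω M : Type*} [MetricSpace Ω] [MetricSpace M]

/-- Fiber forward iterates `F_ω^n = F_{θ^{n-1}ω} ∘ ⋯ ∘ F_ω` as homeomorphisms. -/
def fIterH (θ : Ω ≃ₜ Ω) (F : Ω → M ≃ₜ M) (ω : Ω) : ℕ → (M ≃ₜ M)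
  | 0 => Homeomorph.refl M
  | n + 1 => (fIterH θ F ω n).trans (F ((⇑θ)^[n] ω))

/-- Fiber iterates `F_ω^t` for `t ∈ ℤ`, with `F_ω^{-n} = (F_{θ^{-n}ω}^n)⁻¹`. -/
def fIterZ (θ : Ω ≃ₜ Ω) (F : Ω → M ≃ₜ M) (ω : Ω) : ℤ → (M ≃ₜ M)
  | Int.ofNat n => fIterH θ F ω n
  | Int.negSucc n => (fIterH θ F ((⇑θ.symm)^[n + 1] ω) (n + 1)).symm

/-- The iterates `θ^t` of the base homeomorphism, `t ∈ ℤ`. -/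
def thIterZ (θ : Ω ≃ₜ Ω) : ℤ → Ω → Ω
  | Int.ofNat n => (⇑θ)^[n]
  | Int.negSucc n => (⇑θ.symm)^[n + 1]

/-- Local stable set `W^s_ε(ω,x)`. -/
def Ws (θ : Ω ≃ₜ Ω) (F : Ω → M ≃ₜ M) (ε : ℝ) (ω : Ω) (x : M) : Set M :=
  {y | ∀ n : ℕ, dist (fIterH θ F ω n x) (fIterH θ F ω n y) ≤ ε}

/-- Local unstable set `W^u_ε(ω,x)`. -/
def Wu (θ : Ω ≃ₜ Ω) (F : Ω → M ≃ₜ M) (ε : ℝ) (ω : Ω) (x : M) : Set M :=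
  {y | ∀ n : ℕ, dist (fIterZ θ F ω (-(n : ℤ)) x) (fIterZ θ F ω (-(n : ℤ)) y) ≤ ε}

lemma fIterH_succ_apply (θ : Ω ≃ₜ Ω) (F : Ω → M ≃ₜ M) (ω : Ω) (n : ℕ) (x : M) :
    fIterH θ F ω (n + 1) x = F ((⇑θ)^[n] ω) (fIterH θ F ω n x) := rfl

lemma fIterH_add (θ : Ω ≃ₜ Ω) (F : Ω → M ≃ₜ M) (ω : Ω) (a b : ℕ) (x : M) :
    fIterH θ F ω (a + b) x = fIterH θ F ((⇑θ)^[a] ω) b (fIterH θ F ω a x) := by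
  induction b with
  | zero => rfl
  | succ b ih =>
    rw [← Nat.add_assoc, fIterH_succ_apply, fIterH_succ_apply, ih]
    congr 2
    rw [Nat.add_comm a b, Function.iterate_add_apply]

lemma iter_leftInv (θ : Ω ≃ₜ Ω) (k : ℕ) (ω : Ω) : (⇑θ.symm)^[k] ((⇑θ)^[k] ω) = ω :=
  (Function.LeftInverse.iterate (fun x => θ.symm_apply_apply x) k) ω

lemma iter_rightInv (θ : Ω ≃ₜ Ω) (k : ℕ) (ω : Ω) : (⇑θ)^[k] ((⇑θ.symm)^[k] ω) = ω :=
  (Function.LeftInverse.iterate (fun x => θ.apply_symm_apply x) k) ω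

lemma fIterZ_neg_eq_symm (θ : Ω ≃ₜ Ω) (F : Ω → M ≃ₜ M) (ω : Ω) (n : ℕ) :
    fIterZ θ F ((⇑θ)^[n] ω) (-(n : ℤ)) = (fIterH θ F ω n).symm := by
  cases n with
  | zero => rfl
  | succ m =>
    show fIterZ θ F ((⇑θ)^[m + 1] ω) (Int.negSucc m) = _
    show (fIterH θ F ((⇑θ.symm)^[m + 1] ((⇑θ)^[m + 1] ω)) (m + 1)).symm = _
    rw [iter_leftInv]

lemma fIterZ_neg_comp (θ : Ω ≃ₜ Ω) (F : Ω → M ≃ₜ M) (ω : Ω) (n m : ℕ) (v : M) :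
    fIterZ θ F ((⇑θ)^[n] ω) (-((n + m : ℕ) : ℤ)) v =
      fIterZ θ F ω (-(m : ℤ)) (fIterZ θ F ((⇑θ)^[n] ω) (-(n : ℤ)) v) := by
  set ω0 := (⇑θ.symm)^[m] ω with hω0
  have hω : (⇑θ)^[m] ω0 = ω := iter_rightInv θ m ω
  have h1 : (⇑θ)^[n] ω = (⇑θ)^[n + m] ω0 := by
    rw [Function.iterate_add_apply, hω]
  have e1 : fIterZ θ F ((⇑θ)^[n] ω) (-((n + m : ℕ) : ℤ)) = (fIterH θ F ω0 (n + m)).symm := by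
    rw [h1]; exact fIterZ_neg_eq_symm θ F ω0 (n + m)
  have e2 := fIterZ_neg_eq_symm θ F ω0 m
  rw [hω] at e2
  have e3 := fIterZ_neg_eq_symm θ F ω n
  rw [e1, e2, e3]
  have key : fIterH θ F ω0 (n + m) ((fIterH θ F ω0 m).symm ((fIterH θ F ω n).symm v)) = v := by
    rw [Nat.add_comm n m, fIterH_add, hω, Homeomorph.apply_symm_apply,
      Homeomorph.apply_symm_apply]
  exact ((fIterH θ F ω0 (n + m)).toEquiv.symm_apply_eq).mpr key.symm


/-- under (H1),(H2),(H3), for every `ε ∈ (0,ε₀]` there is `N` such that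
`F_ω^n(W^u_ε(ω,x)) ∩ W^s_ε(θ^n ω, y) ≠ ∅` for all `x,y ∈ M`, all `ω ∈ Ω`, all `n ≥ N`. -/
theorem unstable_hits_stable
    [CompactSpace Ω] [CompactSpace M]
    (θ : Ω ≃ₜ Ω) (F : Ω → M ≃ₜ M)
    (hF : Continuous fun p : Ω × M => F p.1 p.2)
    (ε₀ lam : ℝ) (hε₀ : 0 < ε₀) (hlam : 0 < lam)
    -- (H1), stable part
    (H1s : ∀ ε : ℝ, 0 < ε → ε ≤ ε₀ → ∀ (ω : Ω) (x y : M), y ∈ Ws θ F ε ω x →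
      ∀ n : ℕ, dist (fIterH θ F ω n x) (fIterH θ F ω n y) ≤
        Real.exp (-(n : ℝ) * lam) * dist x y)
    -- (H1), unstable part
    (H1u : ∀ ε : ℝ, 0 < ε → ε ≤ ε₀ → ∀ (ω : Ω) (x y : M), y ∈ Wu θ F ε ω x →
      ∀ n : ℕ, dist (fIterZ θ F ω (-(n : ℤ)) x) (fIterZ θ F ω (-(n : ℤ)) y) ≤
        Real.exp (-(n : ℝ) * lam) * dist x y)
    -- (H2), local product structure
    (H2 : ∀ ε : ℝ, 0 < ε → ε ≤ ε₀ → ∃ δ : ℝ, 0 < δ ∧ δ < ε ∧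
      ∀ (ω : Ω) (x y : M), dist x y < δ → ∃! z : M, z ∈ Ws θ F ε ω x ∩ Wu θ F ε ω y)
    -- (H3), topological mixing on fibers
    (H3 : ∀ U V : Set M, IsOpen U → IsOpen V → U.Nonempty → V.Nonempty →
      ∃ N : ℕ, ∀ n : ℕ, N ≤ n → ∀ ω : Ω,
        ((fun z => fIterH θ F ω n z) '' U ∩ V).Nonempty) :
    ∀ ε : ℝ, 0 < ε → ε ≤ ε₀ → ∃ N : ℕ, ∀ (x y : M) (ω : Ω) (n : ℕ), N ≤ n →
      ((fun z => fIterH θ F ω n z) '' Wu θ F ε ω x ∩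
        Ws θ F ε ((⇑θ)^[n] ω) y).Nonempty := by
  classical
  intro ε hε hεε₀
  obtain ⟨δ, hδ0, hδε, hδ⟩ := H2 (ε / 2) (by linarith) (by linarith)
  set r := Real.exp (-lam) with hr
  have hr0 : 0 < r := Real.exp_pos _
  have hr1 : r < 1 := by rw [hr, Real.exp_lt_one_iff]; linarith
  obtain ⟨N0, hN0⟩ := exists_pow_lt_of_lt_one (show (0 : ℝ) < δ / ε by positivity) hr1
  obtain ⟨t, -, htfin, htcov⟩ :=
    finite_cover_balls_of_compact (isCompact_univ : IsCompact (univ : Set M))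
      (show (0 : ℝ) < δ / 4 by positivity)
  choose g hg using fun (p q : M) =>
    H3 (Metric.ball p (δ / 4)) (Metric.ball q (δ / 4)) Metric.isOpen_ball Metric.isOpen_ball
      ⟨p, Metric.mem_ball_self (by positivity)⟩ ⟨q, Metric.mem_ball_self (by positivity)⟩
  set T := htfin.toFinset with hT
  refine ⟨max N0 ((T ×ˢ T).sup fun pq => g pq.1 pq.2), ?_⟩
  intro x y ω n hn
  obtain ⟨p, hpt, hxp⟩ : ∃ p ∈ t, x ∈ Metric.ball p (δ / 4) := by
    simpa using htcov (mem_univ x)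
  obtain ⟨q, hqt, hyq⟩ : ∃ q ∈ t, y ∈ Metric.ball q (δ / 4) := by
    simpa using htcov (mem_univ y)
  have hgn : g p q ≤ n := by
    refine le_trans (le_trans ?_ (le_max_right N0 _)) hn
    exact Finset.le_sup (f := fun pq => g pq.1 pq.2) (b := (p, q))
      (Finset.mem_product.mpr ⟨htfin.mem_toFinset.mpr hpt, htfin.mem_toFinset.mpr hqt⟩)
  obtain ⟨v0, ⟨z, hzU, hzv⟩, hv0V⟩ := hg p q n hgn ω
  have hxz : dist z x < δ := by
    have h1 : dist z p < δ / 4 := Metric.mem_ball.mp hzU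
    have h2 : dist x p < δ / 4 := Metric.mem_ball.mp hxp
    calc dist z x ≤ dist z p + dist p x := dist_triangle _ _ _
      _ < δ := by rw [dist_comm p x]; linarith
  obtain ⟨w1, ⟨hw1s, hw1u⟩, -⟩ := hδ ω z x hxz
  have hw1s' : ∀ k : ℕ, dist (fIterH θ F ω k z) (fIterH θ F ω k w1) ≤ ε / 2 := hw1s
  have hw1u' : ∀ k : ℕ,
      dist (fIterZ θ F ω (-(k : ℤ)) x) (fIterZ θ F ω (-(k : ℤ)) w1) ≤ ε / 2 := hw1u
  have hzw1 : dist z w1 ≤ ε / 2 := by simpa [fIterH] using hw1s' 0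
  have hexp : Real.exp (-(n : ℝ) * lam) = r ^ n := by
    rw [hr, ← Real.exp_nat_mul]; ring_nf
  have hrn : r ^ n ≤ r ^ N0 :=
    pow_le_pow_of_le_one hr0.le hr1.le (le_trans (le_max_left _ _) hn)
  have hcontr : dist (fIterH θ F ω n z) (fIterH θ F ω n w1) < δ / 2 := by
    have h1 := H1s (ε / 2) (by linarith) (by linarith) ω z w1 hw1s n
    have h2 : Real.exp (-(n : ℝ) * lam) * dist z w1 ≤ r ^ N0 * (ε / 2) := by
      rw [hexp]
      have := Real.exp_pos (-(n : ℝ) * lam)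
      have hd0 : (0 : ℝ) ≤ dist z w1 := dist_nonneg
      nlinarith [pow_nonneg hr0.le n, pow_nonneg hr0.le N0]
    have h3 : r ^ N0 * ε < δ := by
      calc r ^ N0 * ε < (δ / ε) * ε := mul_lt_mul_of_pos_right hN0 hε
        _ = δ := div_mul_cancel₀ _ hε.ne'
    linarith
  have hFny : dist y (fIterH θ F ω n w1) < δ := by
    have h1 : dist v0 q < δ / 4 := Metric.mem_ball.mp hv0V
    have h2 : dist y q < δ / 4 := Metric.mem_ball.mp hyq
    have hzv' : fIterH θ F ω n z = v0 := hzv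
    have h3 : dist y (fIterH θ F ω n z) < δ / 2 := by
      rw [hzv']
      calc dist y v0 ≤ dist y q + dist q v0 := dist_triangle _ _ _
        _ < δ / 2 := by rw [dist_comm q v0]; linarith
    calc dist y (fIterH θ F ω n w1)
        ≤ dist y (fIterH θ F ω n z) + dist (fIterH θ F ω n z) (fIterH θ F ω n w1) :=
          dist_triangle _ _ _
      _ < δ := by linarith
  obtain ⟨v, ⟨hvs, hvu⟩, -⟩ := hδ ((⇑θ)^[n] ω) y (fIterH θ F ω n w1) hFny
  have hvs' : ∀ k : ℕ,
      dist (fIterH θ F ((⇑θ)^[n] ω) k y) (fIterH θ F ((⇑θ)^[n] ω) k v) ≤ ε / 2 := hvs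
  have hvu' : ∀ k : ℕ,
      dist (fIterZ θ F ((⇑θ)^[n] ω) (-(k : ℤ)) (fIterH θ F ω n w1))
        (fIterZ θ F ((⇑θ)^[n] ω) (-(k : ℤ)) v) ≤ ε / 2 := hvu
  refine ⟨v, ⟨(fIterH θ F ω n).symm v, ?_, (fIterH θ F ω n).apply_symm_apply v⟩, ?_⟩
  · intro m
    have key1 := hvu' (n + m)
    rw [fIterZ_neg_comp θ F ω n m, fIterZ_neg_comp θ F ω n m,
      fIterZ_neg_eq_symm θ F ω n, Homeomorph.symm_apply_apply] at key1
    have key2 := hw1u' m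
    calc dist (fIterZ θ F ω (-(m : ℤ)) x)
          (fIterZ θ F ω (-(m : ℤ)) ((fIterH θ F ω n).symm v))
        ≤ dist (fIterZ θ F ω (-(m : ℤ)) x) (fIterZ θ F ω (-(m : ℤ)) w1) +
          dist (fIterZ θ F ω (-(m : ℤ)) w1)
            (fIterZ θ F ω (-(m : ℤ)) ((fIterH θ F ω n).symm v)) := dist_triangle _ _ _
      _ ≤ ε / 2 + ε / 2 := add_le_add key2 key1
      _ = ε := by ring
  · intro m
    exact le_trans (hvs' m) (by linarith)


end Paper
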